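/- Let (p_k)_{k≥0} be a sequence of stochastic matrices on a nonempty finite set S. If there exists a strictly increasing sequence of positive integers (n_k)_{k≥0} such that Σ_{k=0}^∞ α(∏_{i=n_k}^{n_{k+1}−1} p_i) = +∞, then the sequence (p_k) is weakly ergodic: for all m ≥ 0 and all i, j, s ∈ S, lim_{n→∞} |(∏_{k=m}^{n} p_k)(i,s) − (∏_{k=m}^{n} p_k)(j,s)| = 0. -/
import Mathlib


open Filter

set_option linter.unusedSectionVars false

/-- A stochastic matrix on a finite set `S`: nonnegative entries, each row sums to 1. -/
def IsStochastic {S : Type*} [Fintype S] (p : Matrix S S ℝ) : Prop :=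
  (∀ i j, 0 ≤ p i j) ∧ ∀ i, ∑ j, p i j = 1

/-- Doeblin's ergodicity coefficient `α(p) = Σ_j min_i p(i,j)`. -/
noncomputable def doeblin {S : Type*} [Fintype S] [Nonempty S] (p : Matrix S S ℝ) : ℝ :=
  ∑ j, Finset.univ.inf' Finset.univ_nonempty fun i => p i j

/-- The ordered matrix product `p_m * p_{m+1} * ⋯ * p_n`. -/
noncomputable def prodFromTo {S : Type*} [Fintype S] [DecidableEq S]
    (p : ℕ → Matrix S S ℝ) (m n : ℕ) : Matrix S S ℝ :=
  ((List.range (n + 1 - m)).map fun k => p (m + k)).prod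

/-- Weak ergodicity of a sequence of stochastic matrices. -/
def WeaklyErgodic {S : Type*} [Fintype S] [DecidableEq S] (p : ℕ → Matrix S S ℝ) : Prop :=
  ∀ (m : ℕ) (i j s : S),
    Tendsto (fun n => |prodFromTo p m n i s - prodFromTo p m n j s|) atTop (nhds 0)

section Aux

variable {S : Type*} [Fintype S] [Nonempty S] [DecidableEq S]

lemma isStochastic_one : IsStochastic (1 : Matrix S S ℝ) := by
  constructor
  · intro i j
    by_cases h : i = j <;> simp [Matrix.one_apply, h]
  · intro i; simp [Matrix.one_apply]

lemma isStochastic_mul {A B : Matrix S S ℝ} (hA : IsStochastic A) (hB : IsStochastic B) :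
    IsStochastic (A * B) := by
  constructor
  · intro i j
    simp only [Matrix.mul_apply]
    exact Finset.sum_nonneg fun k _ => mul_nonneg (hA.1 i k) (hB.1 k j)
  · intro i
    simp only [Matrix.mul_apply]
    calc ∑ j, ∑ k, A i k * B k j = ∑ k, ∑ j, A i k * B k j := Finset.sum_comm
      _ = ∑ k, A i k * ∑ j, B k j := by simp [Finset.mul_sum]
      _ = 1 := by simp [hB.2, hA.2 i]

lemma isStochastic_listProd : ∀ (l : List (Matrix S S ℝ)),
    (∀ A ∈ l, IsStochastic A) → IsStochastic l.prod
  | [], _ => by simpa using isStochastic_one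
  | A :: l, h => by
    rw [List.prod_cons]
    exact isStochastic_mul (h A (by simp))
      (isStochastic_listProd l fun B hB => h B (by simp [hB]))

lemma isStochastic_prodFromTo (p : ℕ → Matrix S S ℝ) (hp : ∀ k, IsStochastic (p k)) (m n : ℕ) :
    IsStochastic (prodFromTo p m n) := by
  apply isStochastic_listProd
  intro A hA
  simp only [List.mem_map] at hA
  obtain ⟨k, -, rfl⟩ := hA
  exact hp _

/-- Oscillation of a vector. -/
noncomputable def osc (g : S → ℝ) : ℝ :=
  Finset.univ.sup' Finset.univ_nonempty g - Finset.univ.inf' Finset.univ_nonempty g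

lemma osc_nonneg (g : S → ℝ) : 0 ≤ osc g := by
  obtain ⟨i0⟩ := (inferInstance : Nonempty S)
  have h1 := Finset.inf'_le g (Finset.mem_univ i0)
  have h2 := Finset.le_sup' g (Finset.mem_univ i0)
  unfold osc
  linarith

lemma abs_sub_le_osc (g : S → ℝ) (i j : S) : |g i - g j| ≤ osc g := by
  rw [abs_sub_le_iff]
  constructor <;>
    exact sub_le_sub (Finset.le_sup' g (Finset.mem_univ _))
      (Finset.inf'_le g (Finset.mem_univ _))

lemma doeblin_nonneg {A : Matrix S S ℝ} (hA : IsStochastic A) : 0 ≤ doeblin A :=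
  Finset.sum_nonneg fun j _ => Finset.le_inf' _ _ fun i _ => hA.1 i j

lemma doeblin_le_one {A : Matrix S S ℝ} (hA : IsStochastic A) : doeblin A ≤ 1 := by
  obtain ⟨i0⟩ := (inferInstance : Nonempty S)
  calc doeblin A ≤ ∑ j, A i0 j :=
        Finset.sum_le_sum fun j _ => Finset.inf'_le _ (Finset.mem_univ i0)
    _ = 1 := hA.2 i0

lemma osc_mulVec_le {A : Matrix S S ℝ} (hA : IsStochastic A) (g : S → ℝ) :
    osc (A.mulVec g) ≤ (1 - doeblin A) * osc g := by
  set M := Finset.univ.sup' Finset.univ_nonempty g with hM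
  set L := Finset.univ.inf' Finset.univ_nonempty g with hL
  set mm : S → ℝ := fun k => Finset.univ.inf' Finset.univ_nonempty (fun i => A i k) with hmm
  have hsum : ∀ i : S, ∑ k, (A i k - mm k) = 1 - doeblin A := by
    intro i
    rw [Finset.sum_sub_distrib, hA.2 i]
    rfl
  have hnn : ∀ i k : S, 0 ≤ A i k - mm k := fun i k =>
    sub_nonneg.2 (Finset.inf'_le _ (Finset.mem_univ i))
  have hdecomp : ∀ i : S, A.mulVec g i = (∑ k, mm k * g k) + ∑ k, (A i k - mm k) * g k := by
    intro i
    simp only [Matrix.mulVec, dotProduct, ← Finset.sum_add_distrib]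
    apply Finset.sum_congr rfl
    intro k _
    ring
  have hup : ∀ i : S, A.mulVec g i ≤ (∑ k, mm k * g k) + (1 - doeblin A) * M := by
    intro i
    rw [hdecomp i]
    gcongr with k hk
    · calc ∑ k, (A i k - mm k) * g k ≤ ∑ k, (A i k - mm k) * M := by
            apply Finset.sum_le_sum
            intro k _
            exact mul_le_mul_of_nonneg_left (Finset.le_sup' g (Finset.mem_univ k)) (hnn i k)
        _ = (1 - doeblin A) * M := by rw [← Finset.sum_mul, hsum i]
  have hdown : ∀ i : S, (∑ k, mm k * g k) + (1 - doeblin A) * L ≤ A.mulVec g i := by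
    intro i
    rw [hdecomp i]
    gcongr with k hk
    · calc (1 - doeblin A) * L = ∑ k, (A i k - mm k) * L := by rw [← Finset.sum_mul, hsum i]
        _ ≤ ∑ k, (A i k - mm k) * g k := by
            apply Finset.sum_le_sum
            intro k _
            exact mul_le_mul_of_nonneg_left (Finset.inf'_le g (Finset.mem_univ k)) (hnn i k)
  have h1 : Finset.univ.sup' Finset.univ_nonempty (A.mulVec g) ≤
      (∑ k, mm k * g k) + (1 - doeblin A) * M := Finset.sup'_le _ _ fun i _ => hup i
  have h2 : (∑ k, mm k * g k) + (1 - doeblin A) * L ≤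
      Finset.univ.inf' Finset.univ_nonempty (A.mulVec g) := Finset.le_inf' _ _ fun i _ => hdown i
  have : osc (A.mulVec g) ≤ ((∑ k, mm k * g k) + (1 - doeblin A) * M) -
      ((∑ k, mm k * g k) + (1 - doeblin A) * L) := sub_le_sub h1 h2
  calc osc (A.mulVec g) ≤ _ := this
    _ = (1 - doeblin A) * (M - L) := by ring
    _ = (1 - doeblin A) * osc g := rfl

lemma osc_col_le_one {A : Matrix S S ℝ} (hA : IsStochastic A) (s : S) :
    osc (fun i => A i s) ≤ 1 := by
  unfold osc
  have h1 : Finset.univ.sup' Finset.univ_nonempty (fun i => A i s) ≤ 1 := by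
    apply Finset.sup'_le
    intro i _
    calc A i s ≤ ∑ j, A i j := Finset.single_le_sum (fun j _ => hA.1 i j) (Finset.mem_univ s)
      _ = 1 := hA.2 i
  have h2 : (0:ℝ) ≤ Finset.univ.inf' Finset.univ_nonempty (fun i => A i s) :=
    Finset.le_inf' _ _ fun i _ => hA.1 i s
  linarith

lemma osc_mul_col_le {A B : Matrix S S ℝ} (hA : IsStochastic A) (s : S) :
    osc (fun i => (A * B) i s) ≤ (1 - doeblin A) * osc (fun k => B k s) := by
  have h : (fun i => (A * B) i s) = A.mulVec (fun k => B k s) := by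
    funext i
    simp [Matrix.mul_apply, Matrix.mulVec, dotProduct]
  rw [h]
  exact osc_mulVec_le hA _

lemma prodFromTo_split (p : ℕ → Matrix S S ℝ) {m t n : ℕ} (h1 : m ≤ t + 1) (h2 : t ≤ n) :
    prodFromTo p m n = prodFromTo p m t * prodFromTo p (t + 1) n := by
  unfold prodFromTo
  have h3 : n + 1 - m = (t + 1 - m) + (n - t) := by omega
  rw [h3, List.range_add, List.map_append, List.prod_append]
  congr 1
  rw [List.map_map]
  have h4 : n + 1 - (t + 1) = n - t := by omega
  rw [h4]
  congr 1
  apply List.map_congr_left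
  intro k _
  simp only [Function.comp_apply]
  have h5 : m + (t + 1 - m + k) = t + 1 + k := by omega
  rw [h5]

lemma osc_blocks (p : ℕ → Matrix S S ℝ) (hp : ∀ k, IsStochastic (p k))
    (nseq : ℕ → ℕ) (hmono : StrictMono nseq) (hpos : ∀ k, 0 < nseq k) (s : S) :
    ∀ (d a n : ℕ), nseq (a + d) ≤ n + 1 →
      osc (fun i => prodFromTo p (nseq a) n i s) ≤
        ∏ k ∈ Finset.range d,
          (1 - doeblin (prodFromTo p (nseq (a + k)) (nseq (a + k + 1) - 1))) := by
  intro d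
  induction d with
  | zero =>
    intro a n _
    simpa using osc_col_le_one (isStochastic_prodFromTo p hp _ _) s
  | succ d ih =>
    intro a n hn
    have h1 : nseq a ≤ nseq (a + 1) := hmono.monotone (by omega)
    have h2 : nseq (a + 1) ≤ n + 1 := le_trans (hmono.monotone (by omega)) hn
    have hpa : 0 < nseq (a + 1) := hpos _
    have hsplit : prodFromTo p (nseq a) n =
        prodFromTo p (nseq a) (nseq (a + 1) - 1) * prodFromTo p (nseq (a + 1)) n := by
      have ht : nseq (a + 1) - 1 + 1 = nseq (a + 1) := by omega
      have := prodFromTo_split p (m := nseq a) (t := nseq (a + 1) - 1) (n := n)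
        (by omega) (by omega)
      rwa [ht] at this
    have hstochA : IsStochastic (prodFromTo p (nseq a) (nseq (a + 1) - 1)) :=
      isStochastic_prodFromTo p hp _ _
    have key := osc_mul_col_le (B := prodFromTo p (nseq (a + 1)) n) hstochA s
    have ihh := ih (a + 1) n (by rw [show a + 1 + d = a + (d + 1) by omega]; exact hn)
    have hα0 : 0 ≤ 1 - doeblin (prodFromTo p (nseq a) (nseq (a + 1) - 1)) :=
      sub_nonneg.2 (doeblin_le_one hstochA)
    calc osc (fun i => prodFromTo p (nseq a) n i s)
        ≤ (1 - doeblin (prodFromTo p (nseq a) (nseq (a + 1) - 1))) *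
            osc (fun k => prodFromTo p (nseq (a + 1)) n k s) := by rw [hsplit]; exact key
      _ ≤ (1 - doeblin (prodFromTo p (nseq a) (nseq (a + 1) - 1))) *
            ∏ k ∈ Finset.range d,
              (1 - doeblin (prodFromTo p (nseq (a + 1 + k)) (nseq (a + 1 + k + 1) - 1))) :=
          mul_le_mul_of_nonneg_left ihh hα0
      _ = ∏ k ∈ Finset.range (d + 1),
            (1 - doeblin (prodFromTo p (nseq (a + k)) (nseq (a + k + 1) - 1))) := by
          rw [Finset.prod_range_succ', mul_comm]
          congr 1
          apply Finset.prod_congr rfl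
          intro k _
          have e1 : a + 1 + k = a + (k + 1) := by omega
          rw [e1]

lemma prod_le_exp_neg_sum (f : ℕ → ℝ) (h1 : ∀ k, f k ≤ 1) (t : Finset ℕ) :
    ∏ k ∈ t, (1 - f k) ≤ Real.exp (-∑ k ∈ t, f k) := by
  have he : Real.exp (-∑ k ∈ t, f k) = ∏ k ∈ t, Real.exp (-f k) := by
    rw [← Real.exp_sum]
    congr 1
    rw [← Finset.sum_neg_distrib]
  rw [he]
  apply Finset.prod_le_prod
  · intro k _; linarith [h1 k]
  · intro k _
    have := Real.add_one_le_exp (-f k)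
    linarith

end Aux

theorem doeblin_sufficient_weak_ergodicity {S : Type*} [Fintype S] [Nonempty S] [DecidableEq S]
    (p : ℕ → Matrix S S ℝ) (hp : ∀ k, IsStochastic (p k))
    (nseq : ℕ → ℕ) (hmono : StrictMono nseq) (hpos : ∀ k, 0 < nseq k)
    (hdiv : Tendsto
      (fun N => ∑ k ∈ Finset.range N, doeblin (prodFromTo p (nseq k) (nseq (k + 1) - 1)))
      atTop atTop) :
    WeaklyErgodic p := by
  intro m i j s
  rw [Metric.tendsto_atTop]
  intro ε hε
  set α : ℕ → ℝ := fun k => doeblin (prodFromTo p (nseq k) (nseq (k + 1) - 1)) with hαdef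
  have hα0 : ∀ k, 0 ≤ α k := fun k => doeblin_nonneg (isStochastic_prodFromTo p hp _ _)
  have hα1 : ∀ k, α k ≤ 1 := fun k => doeblin_le_one (isStochastic_prodFromTo p hp _ _)
  set Ssum : ℕ → ℝ := fun N => ∑ k ∈ Finset.range N, α k with hSdef
  obtain ⟨N, hN1, hN2⟩ :=
    ((hdiv.eventually_ge_atTop (Ssum m + 1 - Real.log ε)).and (eventually_ge_atTop m)).exists
  refine ⟨nseq N, fun n hn => ?_⟩
  have hdist : dist |prodFromTo p m n i s - prodFromTo p m n j s| 0 =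
      |prodFromTo p m n i s - prodFromTo p m n j s| := by
    rw [Real.dist_eq, sub_zero, abs_abs]
  rw [hdist]
  set d := N - m with hd
  have hNd : N = m + d := by omega
  have hmn : nseq m ≤ nseq N := hmono.monotone hN2
  have hsplit : prodFromTo p m n = prodFromTo p m (nseq m - 1) * prodFromTo p (nseq m) n := by
    have hm1 : 0 < nseq m := hpos m
    have hmle : m ≤ nseq m := hmono.le_apply
    have ht : nseq m - 1 + 1 = nseq m := by omega
    have := prodFromTo_split p (m := m) (t := nseq m - 1) (n := n) (by omega) (by omega)
    rwa [ht] at this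
  have hstochA : IsStochastic (prodFromTo p m (nseq m - 1)) := isStochastic_prodFromTo p hp _ _
  have hblocks := osc_blocks p hp nseq hmono hpos s d m n (by rw [← hNd]; omega)
  have hsum_split : Ssum N = Ssum m + ∑ k ∈ Finset.range d, α (m + k) := by
    rw [hSdef, hNd]
    simp only
    rw [Finset.sum_range_add]
  calc |prodFromTo p m n i s - prodFromTo p m n j s|
      ≤ osc (fun i => prodFromTo p m n i s) := by
        exact abs_sub_le_osc (fun i => prodFromTo p m n i s) i j
    _ ≤ (1 - doeblin (prodFromTo p m (nseq m - 1))) *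
          osc (fun k => prodFromTo p (nseq m) n k s) := by
        rw [hsplit]; exact osc_mul_col_le hstochA s
    _ ≤ osc (fun k => prodFromTo p (nseq m) n k s) :=
        mul_le_of_le_one_left (osc_nonneg _) (by linarith [doeblin_nonneg hstochA])
    _ ≤ ∏ k ∈ Finset.range d, (1 - α (m + k)) := hblocks
    _ ≤ Real.exp (-∑ k ∈ Finset.range d, α (m + k)) :=
        prod_le_exp_neg_sum (fun k => α (m + k)) (fun k => hα1 _) _
    _ = Real.exp (Ssum m - Ssum N) := by rw [hsum_split]; congr 1; ring
    _ ≤ Real.exp (Real.log ε - 1) := Real.exp_le_exp.2 (by linarith)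
    _ < ε := by
        rw [Real.exp_sub, Real.exp_log hε]
        have h1 : (1:ℝ) + 1 ≤ Real.exp 1 := by
          have := Real.add_one_le_exp (1:ℝ); linarith
        exact div_lt_self hε (by linarith)
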